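/- Let a, b, m be integers with 1 ≤ a < b ≤ m such that there exists a positive integer k dividing b − a with the property that for all h ≥ 1, 2^h·k ≢ a (mod m) and 2^h·k ≢ b (mod m). Then for every real x ≥ 0 and all integers n ≥ 0, p_n(a,b,m;x,1) ≥ p_n(b,a,m;x,1), where p_n(a,b,m;x,y) = Σ x^{ℓ(λ)} y^{ℓ(μ)} over pairs (λ,μ) ∈ (partitions) × (distinct-parts partitions) with |λ|+|μ| = n and ℓ_{a,m}(λ)+ℓ_{a,m}(μ) > ℓ_{b,m}(λ)+ℓ_{b,m}(μ). -/

import Mathlib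

/-- The number of parts of the multiset `μ` congruent to `a` modulo `m`. -/
def countRes (m a : ℕ) (μ : Multiset ℕ) : ℕ :=
  (μ.filter (fun p => p % m = a % m)).card

/-- The residue-weighted biased partition function
`p_n(a,b,m;x,y) = Σ x^{ℓ(λ)} y^{ℓ(μ)}`, summed over pairs `(λ, μ)` of a
partition `λ` and a distinct-parts partition `μ` with `|λ| + |μ| = n` and
`ℓ_{a,m}(λ) + ℓ_{a,m}(μ) > ℓ_{b,m}(λ) + ℓ_{b,m}(μ)`. -/
noncomputable def pw (a b m : ℕ) (x y : ℝ) (n : ℕ) : ℝ :=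
  ∑ kl ∈ Finset.HasAntidiagonal.antidiagonal n,
    ∑ p ∈ (Finset.univ : Finset (kl.1.Partition × kl.2.Partition)).filter
        (fun p => p.2.parts.Nodup ∧
          countRes m b p.1.parts + countRes m b p.2.parts <
            countRes m a p.1.parts + countRes m a p.2.parts),
      x ^ Multiset.card p.1.parts * y ^ Multiset.card p.2.parts

namespace DWRB

/-- swap of the two residue classes `a`, `b` mod `m`. -/
def sw (a b m p : ℕ) : ℕ :=
  if p % m = a % m then p + (b - a) else if p % m = b % m then p - (b - a) else p

/-- `(b-a)/k`. -/
def s0 (a b k : ℕ) : ℕ := (b - a) / k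

/-- the marker multiplier. -/
def uu (a b m k : ℕ) : ℕ := if k % m = a % m ∧ s0 a b k % 2 = 1 then s0 a b k else 1

/-- the marker part. -/
def ww (a b m k : ℕ) : ℕ := k * uu a b m k

/-- chips: numbers of the form `2^(j+1)*k`. -/
def IsChip (k p : ℕ) : Prop := ∃ j < p, p = 2 * k * 2 ^ j

instance (k p : ℕ) : Decidable (IsChip k p) := by unfold IsChip; infer_instance

lemma isChip_iff {k p : ℕ} (hk : 1 ≤ k) : IsChip k p ↔ ∃ j, p = 2 * k * 2 ^ j := by
  constructor
  · rintro ⟨j, _, h⟩; exact ⟨j, h⟩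
  · rintro ⟨j, rfl⟩
    refine ⟨j, ?_, rfl⟩
    calc j < 2 ^ j := Nat.lt_two_pow_self
    _ ≤ 2 * k * 2 ^ j := Nat.le_mul_of_pos_left _ (by positivity)

/-- the multiset of chips encoding `T` in binary (total sum `2*k*T`). -/
def chipMS (k T : ℕ) : Multiset ℕ := ((T.bitIndices.map fun j => 2 * k * 2 ^ j : List ℕ) : Multiset ℕ)

def Spec (a b m k p : ℕ) : Prop := IsChip k p ∨ p = ww a b m k

instance (a b m k p : ℕ) : Decidable (Spec a b m k p) := by unfold Spec; infer_instance

/-- The injection, on pairs of multisets. -/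
def Phi (a b m k : ℕ) (lm : Multiset ℕ × Multiset ℕ) : Multiset ℕ × Multiset ℕ :=
  let Λ := lm.1.map (sw a b m)
  let ρ := lm.2.map (sw a b m)
  let D := (countRes m b lm.1 + countRes m b lm.2) - (countRes m a lm.1 + countRes m a lm.2)
  let V := ρ.count (ww a b m k)
  let Te := (ρ.filter (IsChip k)).sum / (2 * k)
  let V' := (V + s0 a b k * D) % 2
  let T' := (2 * Te + s0 a b k * D + uu a b m k * V - uu a b m k * V') / 2
  (Λ, ρ.filter (fun p => ¬ Spec a b m k p) + Multiset.replicate V' (ww a b m k) + chipMS k T')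

/-- The left inverse of `Phi`. -/
def Theta (a b m k : ℕ) (lm : Multiset ℕ × Multiset ℕ) : Multiset ℕ × Multiset ℕ :=
  let L := lm.1; let M := lm.2
  let D := (countRes m a L + countRes m a M) - (countRes m b L + countRes m b M)
  let V := M.count (ww a b m k)
  let Tt := (M.filter (IsChip k)).sum / (2 * k)
  let V0 := (V + s0 a b k * D) % 2
  let T0 := (2 * Tt + uu a b m k * V - (uu a b m k * V0 + s0 a b k * D)) / 2
  (L.map (sw a b m),
    (M.filter (fun p => ¬ Spec a b m k p) + Multiset.replicate V0 (ww a b m k) + chipMS k T0).map (sw a b m))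

section Main
set_option linter.unusedSectionVars false

variable {a b m k : ℕ} (ha : 1 ≤ a) (hab : a < b) (hbm : b ≤ m) (hk : 1 ≤ k)
  (hkd : k ∣ (b - a))
  (hcong : ∀ h : ℕ, 1 ≤ h → ¬(2 ^ h * k ≡ a [MOD m]) ∧ ¬(2 ^ h * k ≡ b [MOD m]))

include ha hab hbm in
lemma ham : a % m = a := Nat.mod_eq_of_lt (lt_of_lt_of_le hab hbm)

include ha hab hbm in
lemma hbnea : b % m ≠ a % m := by
  rw [ham ha hab hbm]
  rcases eq_or_lt_of_le hbm with h | h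
  · subst h; rw [Nat.mod_self]; omega
  · rw [Nat.mod_eq_of_lt h]; omega

include ha hab hbm hk hkd in
lemma hkb : k ≤ b - a := Nat.le_of_dvd (by omega) hkd

include ha hab hbm hk hkd in
lemma hks0 : k * s0 a b k = b - a := Nat.mul_div_cancel' hkd

include ha hab hbm hk hkd in
lemma hs0pos : 1 ≤ s0 a b k := by
  have h1 := hks0 ha hab hbm hk hkd
  have h2 : 1 ≤ b - a := by omega
  rcases Nat.eq_zero_or_pos (s0 a b k) with h | h
  · rw [h, Nat.mul_zero] at h1; omega
  · exact h

include ha hab hbm hk hkd in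
lemma hka : k % m = a % m → k = a := by
  intro h
  have h1 := hkb ha hab hbm hk hkd
  have : k % m = k := Nat.mod_eq_of_lt (by omega)
  rw [this, ham ha hab hbm] at h; exact h

include ha hab hbm hk hkd in
lemma hknb : k % m ≠ b % m := by
  have h1 := hkb ha hab hbm hk hkd
  have hkm : k % m = k := Nat.mod_eq_of_lt (by omega)
  rw [hkm]
  rcases eq_or_lt_of_le hbm with h | h
  · subst h; rw [Nat.mod_self]; omega
  · rw [Nat.mod_eq_of_lt h]; omega

include hk in
lemma u_odd : uu a b m k % 2 = 1 := by
  unfold uu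
  split
  · next h => exact h.2
  · rfl

include ha hab hbm hk hkd in
lemma u_le_s0 : uu a b m k ≤ s0 a b k := by
  have := hs0pos ha hab hbm hk hkd
  unfold uu; split <;> omega

include hk in
lemma u_pos : 1 ≤ uu a b m k := by
  have := u_odd (a := a) (b := b) (m := m) hk; omega

include hk in
lemma w_pos : 1 ≤ ww a b m k := by
  have := u_pos (a := a) (b := b) (m := m) hk
  unfold ww; exact Nat.one_le_iff_ne_zero.2 (by positivity)

include hk in
lemma w_not_chip : ¬ IsChip k (ww a b m k) := by
  rw [isChip_iff hk]
  rintro ⟨j, hj⟩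
  unfold ww at hj
  have hu := u_odd (a := a) (b := b) (m := m) hk
  rw [mul_comm 2 k, mul_assoc] at hj
  have : uu a b m k = 2 * 2 ^ j := Nat.eq_of_mul_eq_mul_left (by omega) hj
  omega

include ha hab hbm hk hkd hcong in
lemma chip_class {p : ℕ} (hp : IsChip k p) : p % m ≠ a % m ∧ p % m ≠ b % m := by
  rw [isChip_iff hk] at hp
  obtain ⟨j, rfl⟩ := hp
  have h : 2 * k * 2 ^ j = 2 ^ (j + 1) * k := by ring
  rw [h]
  exact (hcong (j + 1) (by omega))

include ha hab hbm hk hkd hcong in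
lemma w_class (hs : s0 a b k % 2 = 1) :
    ww a b m k % m ≠ a % m ∧ ww a b m k % m ≠ b % m := by
  by_cases hcase : k % m = a % m
  · have hkaa : k = a := hka ha hab hbm hk hkd hcase
    have huu : uu a b m k = s0 a b k := by unfold uu; rw [if_pos ⟨hcase, hs⟩]
    have hw : ww a b m k = b - a := by
      unfold ww; rw [huu]; exact hks0 ha hab hbm hk hkd
    constructor
    · intro h
      -- then b ≡ 2a, contradicting hcong 1
      have h2 : a + ww a b m k = b := by rw [hw]; omega
      have hmod : ww a b m k ≡ a [MOD m] := h
      have : b ≡ a + a [MOD m] := by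
        calc b = a + ww a b m k := h2.symm
        _ ≡ a + a [MOD m] := Nat.ModEq.add_left a hmod
      have hc := (hcong 1 le_rfl).2
      apply hc
      have : 2 ^ 1 * k = a + a := by rw [hkaa]; ring
      rw [this]
      exact ((Nat.ModEq.refl _).trans ‹b ≡ a + a [MOD m]›).symm
    · intro h
      -- then a ≡ 0 mod m, impossible
      have h2 : a + ww a b m k = b := by rw [hw]; omega
      have hmod : ww a b m k ≡ b [MOD m] := h
      have : a + b ≡ 0 + b [MOD m] := by
        calc a + b ≡ a + ww a b m k [MOD m] := Nat.ModEq.add_left a hmod.symm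
        _ = b := h2
        _ = 0 + b := by omega
      have ha0 : a ≡ 0 [MOD m] := Nat.ModEq.add_right_cancel' b this
      have : a % m = 0 % m := ha0
      rw [ham ha hab hbm, Nat.zero_mod] at this
      omega
  · have huu : uu a b m k = 1 := by unfold uu; rw [if_neg (by tauto)]
    have hw : ww a b m k = k := by unfold ww; rw [huu, mul_one]
    rw [hw]
    exact ⟨hcase, hknb ha hab hbm hk hkd⟩

-- ### swap lemmas
include ha hab hbm in
lemma sw_of_a {p : ℕ} (hp : p % m = a % m) :
    sw a b m p = p + (b - a) ∧ (p + (b - a)) % m = b % m := by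
  constructor
  · unfold sw; rw [if_pos hp]
  · have h1 : p ≡ a [MOD m] := hp
    have h2 : p + (b - a) ≡ a + (b - a) [MOD m] := Nat.ModEq.add_right _ h1
    have h3 : a + (b - a) = b := by omega
    rw [h3] at h2
    exact h2

include ha hab hbm in
lemma sw_of_b {p : ℕ} (hp : p % m = b % m) (hpos : 0 < p) :
    b ≤ p ∧ sw a b m p = p - (b - a) ∧ (p - (b - a)) % m = a % m := by
  have hbp : b ≤ p := by
    rcases eq_or_lt_of_le hbm with h | h
    · have h0 : p % m = 0 := by rw [hp, ← h, h, Nat.mod_self]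
      have := Nat.le_of_dvd hpos (Nat.dvd_of_mod_eq_zero h0)
      omega
    · have : p % m = b := by rw [hp, Nat.mod_eq_of_lt h]
      have := Nat.mod_le p m
      omega
  refine ⟨hbp, ?_, ?_⟩
  · unfold sw
    rw [if_neg, if_pos hp]
    rw [hp]; exact hbnea ha hab hbm
  · have h1 : p - (b - a) + (b - a) = p := by omega
    have h2 : p - (b - a) + (b - a) ≡ a + (b - a) [MOD m] := by
      rw [h1]
      have h3 : a + (b - a) = b := by omega
      rw [h3]; exact hp
    exact Nat.ModEq.add_right_cancel' _ h2

lemma sw_of_0 {p : ℕ} (h1 : p % m ≠ a % m) (h2 : p % m ≠ b % m) : sw a b m p = p := by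
  unfold sw; rw [if_neg h1, if_neg h2]

include ha hab hbm in
lemma sw_pos {p : ℕ} (hpos : 0 < p) : 0 < sw a b m p := by
  by_cases h1 : p % m = a % m
  · rw [(sw_of_a ha hab hbm h1).1]; omega
  by_cases h2 : p % m = b % m
  · obtain ⟨hbp, he, _⟩ := sw_of_b ha hab hbm h2 hpos
    rw [he]; omega
  · rw [sw_of_0 h1 h2]; exact hpos

include ha hab hbm in
lemma sw_invol {p : ℕ} (hpos : 0 < p) : sw a b m (sw a b m p) = p := by
  by_cases h1 : p % m = a % m
  · obtain ⟨he, hc⟩ := sw_of_a ha hab hbm h1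
    rw [he]
    obtain ⟨_, he2, _⟩ := sw_of_b ha hab hbm hc (by omega)
    rw [he2]; omega
  by_cases h2 : p % m = b % m
  · obtain ⟨hbp, he, hc⟩ := sw_of_b ha hab hbm h2 hpos
    rw [he]
    obtain ⟨he2, _⟩ := sw_of_a ha hab hbm hc
    rw [he2]; omega
  · rw [sw_of_0 h1 h2, sw_of_0 h1 h2]

lemma countRes_cons (m c p : ℕ) (M : Multiset ℕ) :
    countRes m c (p ::ₘ M) = countRes m c M + if p % m = c % m then 1 else 0 := by
  unfold countRes
  rw [Multiset.filter_cons]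
  split
  · next h => simp
  · next h => simp

include ha hab hbm in
lemma countRes_map_a (M : Multiset ℕ) (hpos : ∀ p ∈ M, 0 < p) :
    countRes m a (M.map (sw a b m)) = countRes m b M := by
  induction M using Multiset.induction_on with
  | empty => rfl
  | cons p M ih =>
    have hpos' : ∀ q ∈ M, 0 < q := fun q hq => hpos q (Multiset.mem_cons_of_mem hq)
    have hppos : 0 < p := hpos p (Multiset.mem_cons_self _ _)
    rw [Multiset.map_cons, countRes_cons, countRes_cons, ih hpos']
    congr 1
    by_cases h1 : p % m = a % m
    · obtain ⟨he, hc⟩ := sw_of_a ha hab hbm h1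
      rw [he, hc]
      rw [if_neg (hbnea ha hab hbm), if_neg]
      rw [h1]; exact fun hh => hbnea ha hab hbm hh.symm
    · by_cases h2 : p % m = b % m
      · obtain ⟨_, he, hc⟩ := sw_of_b ha hab hbm h2 hppos
        rw [he, hc, if_pos rfl, if_pos h2]
      · rw [sw_of_0 h1 h2, if_neg h1, if_neg h2]

include ha hab hbm in
lemma countRes_map_b (M : Multiset ℕ) (hpos : ∀ p ∈ M, 0 < p) :
    countRes m b (M.map (sw a b m)) = countRes m a M := by
  induction M using Multiset.induction_on with
  | empty => rfl
  | cons p M ih =>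
    have hpos' : ∀ q ∈ M, 0 < q := fun q hq => hpos q (Multiset.mem_cons_of_mem hq)
    have hppos : 0 < p := hpos p (Multiset.mem_cons_self _ _)
    rw [Multiset.map_cons, countRes_cons, countRes_cons, ih hpos']
    congr 1
    by_cases h1 : p % m = a % m
    · obtain ⟨he, hc⟩ := sw_of_a ha hab hbm h1
      rw [he, hc, if_pos rfl, if_pos h1]
    · by_cases h2 : p % m = b % m
      · obtain ⟨_, he, hc⟩ := sw_of_b ha hab hbm h2 hppos
        rw [he, hc]
        rw [if_neg (fun hh : a % m = b % m => hbnea ha hab hbm hh.symm), if_neg h1]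
      · rw [sw_of_0 h1 h2, if_neg h2, if_neg h1]

include ha hab hbm in
lemma sw_sum (M : Multiset ℕ) (hpos : ∀ p ∈ M, 0 < p) :
    (M.map (sw a b m)).sum + (b - a) * countRes m b M = M.sum + (b - a) * countRes m a M := by
  induction M using Multiset.induction_on with
  | empty => rfl
  | cons p M ih =>
    have hpos' : ∀ q ∈ M, 0 < q := fun q hq => hpos q (Multiset.mem_cons_of_mem hq)
    have hppos : 0 < p := hpos p (Multiset.mem_cons_self _ _)
    have IH := ih hpos'
    rw [Multiset.map_cons, Multiset.sum_cons, Multiset.sum_cons, countRes_cons, countRes_cons]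
    by_cases h1 : p % m = a % m
    · obtain ⟨he, _⟩ := sw_of_a ha hab hbm h1
      rw [he, if_pos h1, if_neg]
      · rw [Nat.mul_add, Nat.mul_add]
        simp only [Nat.mul_one, Nat.mul_zero, Nat.add_zero]
        omega
      · rw [h1]; exact fun hh => hbnea ha hab hbm hh.symm
    · by_cases h2 : p % m = b % m
      · obtain ⟨hbp, he, _⟩ := sw_of_b ha hab hbm h2 hppos
        rw [he, if_pos h2, if_neg h1]
        rw [Nat.mul_add, Nat.mul_add]
        simp only [Nat.mul_one, Nat.mul_zero, Nat.add_zero]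
        omega
      · rw [sw_of_0 h1 h2, if_neg h1, if_neg h2]
        simp only [Nat.add_zero]
        omega

include ha hab hbm in
lemma sw_nodup {M : Multiset ℕ} (hpos : ∀ p ∈ M, 0 < p) (h : M.Nodup) :
    (M.map (sw a b m)).Nodup := by
  refine Multiset.Nodup.map_on ?_ h
  intro p hp q hq he
  have := sw_invol ha hab hbm (hpos p hp)
  rw [he, sw_invol ha hab hbm (hpos q hq)] at this
  exact this.symm

-- ### chip multiset lemmas
lemma chipMS_sum (k T : ℕ) : (chipMS k T).sum = 2 * k * T := by
  unfold chipMS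
  rw [Multiset.sum_coe]
  have h1 : (T.bitIndices.map fun j => 2 * k * 2 ^ j).sum
      = 2 * k * (T.bitIndices.map fun j => (2:ℕ) ^ j).sum := List.sum_map_mul_left _ _ _
  rw [h1, Nat.twoPowSum_bitIndices]

lemma chipMS_mem {k T p : ℕ} (hp : p ∈ chipMS k T) : ∃ j, p = 2 * k * 2 ^ j := by
  unfold chipMS at hp
  rw [Multiset.mem_coe, List.mem_map] at hp
  obtain ⟨j, _, rfl⟩ := hp
  exact ⟨j, rfl⟩

lemma chipMS_chip {k T p : ℕ} (hk : 1 ≤ k) (hp : p ∈ chipMS k T) : IsChip k p := by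
  rw [isChip_iff hk]; exact chipMS_mem hp

lemma chipMS_pos {k T p : ℕ} (hk : 1 ≤ k) (hp : p ∈ chipMS k T) : 0 < p := by
  obtain ⟨j, rfl⟩ := chipMS_mem hp
  positivity

lemma chipMS_nodup {k : ℕ} (hk : 1 ≤ k) (T : ℕ) : (chipMS k T).Nodup := by
  unfold chipMS
  rw [Multiset.coe_nodup]
  refine List.Nodup.map ?_ ?_
  · intro i j h
    simp only at h
    have : (2:ℕ) ^ i = 2 ^ j := Nat.eq_of_mul_eq_mul_left (by omega) h
    exact Nat.pow_right_injective (le_refl 2) this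
  · exact (Nat.bitIndices_sorted (n := T)).nodup

lemma chip_unique {k : ℕ} (hk : 1 ≤ k) (S : Multiset ℕ) (hnd : S.Nodup)
    (hc : ∀ p ∈ S, IsChip k p) : S = chipMS k (S.sum / (2 * k)) := by
  classical
  set ex : ℕ → ℕ := fun p => Nat.log 2 (p / (2 * k)) with hex
  have hback : ∀ p ∈ S, 2 * k * 2 ^ (ex p) = p := by
    intro p hp
    obtain ⟨j, rfl⟩ := (isChip_iff hk).1 (hc p hp)
    have h2k : 0 < 2 * k := by omega
    have hj : ex (2 * k * 2 ^ j) = j := by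
      simp only [hex]
      rw [Nat.mul_div_cancel_left _ h2k, Nat.log_pow one_lt_two]
    rw [hj]
  set E : Multiset ℕ := S.map ex with hE
  have hEnd : E.Nodup := by
    refine Multiset.Nodup.map_on ?_ hnd
    intro p hp q hq h
    rw [← hback p hp, ← hback q hq, h]
  set L : List ℕ := E.sort (· ≤ ·) with hL
  have hLE : (L : Multiset ℕ) = E := Multiset.sort_eq _ _
  have hLnd : L.Nodup := by rw [← Multiset.coe_nodup, hLE]; exact hEnd
  have hLsorted : L.Pairwise (· < ·) :=
    ((Multiset.pairwise_sort (s := E) (r := (· ≤ ·))).and hLnd).imp (fun h => lt_of_le_of_ne h.1 h.2)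
  have h1 : E.map (fun j => 2 * k * 2 ^ j) = S := by
    rw [hE, Multiset.map_map]
    exact (Multiset.map_congr rfl (fun p hp => hback p hp)).trans (Multiset.map_id S)
  have hSL : S = ((L.map fun j => 2 * k * 2 ^ j : List ℕ) : Multiset ℕ) := by
    rw [← h1, ← hLE, Multiset.map_coe]
  have hsum : S.sum = 2 * k * (L.map fun j => (2:ℕ) ^ j).sum := by
    rw [hSL, Multiset.sum_coe]
    exact List.sum_map_mul_left _ _ _
  have hdiv : S.sum / (2 * k) = (L.map fun j => (2:ℕ) ^ j).sum := by
    rw [hsum, Nat.mul_div_cancel_left _ (by omega : 0 < 2 * k)]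
  rw [hdiv]
  unfold chipMS
  rw [Nat.bitIndices_twoPowsum (List.sortedLT_iff_pairwise.mpr hLsorted), ← hSL]

-- ### decomposition
lemma decomp (a b m k : ℕ) (hk : 1 ≤ k) (M : Multiset ℕ) :
    M = M.filter (fun p => ¬ Spec a b m k p) + Multiset.replicate (M.count (ww a b m k)) (ww a b m k)
        + M.filter (IsChip k) := by
  have hwnc := w_not_chip (a := a) (b := b) (m := m) hk
  ext x
  rw [Multiset.count_add, Multiset.count_add, Multiset.count_filter, Multiset.count_filter,
    Multiset.count_replicate]
  by_cases h1 : x = ww a b m k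
  · subst h1
    rw [if_pos rfl, if_neg (not_not_intro (show Spec a b m k (ww a b m k) from Or.inr rfl)), if_neg hwnc]
    omega
  · rw [if_neg (fun hh : ww a b m k = x => h1 hh.symm)]
    by_cases h2 : IsChip k x
    · rw [if_pos h2, if_neg (not_not_intro (show Spec a b m k x from Or.inl h2))]
      omega
    · rw [if_neg h2, if_pos (show ¬ Spec a b m k x from not_or.mpr ⟨h2, h1⟩)]
      omega

lemma countRes_add (m c : ℕ) (s t : Multiset ℕ) :
    countRes m c (s + t) = countRes m c s + countRes m c t := by
  unfold countRes; rw [Multiset.filter_add, Multiset.card_add]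

lemma countRes_eq_zero {m c : ℕ} {s : Multiset ℕ} (h : ∀ p ∈ s, p % m ≠ c % m) :
    countRes m c s = 0 := by
  unfold countRes
  rw [Multiset.card_eq_zero, Multiset.filter_eq_nil]
  exact h

include ha hab hbm hk hkd hcong in
lemma countRes_chipMS (c : ℕ) (hc : c = a ∨ c = b) (T : ℕ) : countRes m c (chipMS k T) = 0 := by
  refine countRes_eq_zero (fun p hp => ?_)
  have := chip_class ha hab hbm hk hkd hcong (chipMS_chip hk hp)
  rcases hc with rfl | rfl
  · exact this.1
  · exact this.2

include ha hab hbm in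
lemma map_sw_sw (M : Multiset ℕ) (hpos : ∀ p ∈ M, 0 < p) :
    (M.map (sw a b m)).map (sw a b m) = M := by
  rw [Multiset.map_map]
  exact (Multiset.map_congr rfl (fun p hp => sw_invol ha hab hbm (hpos p hp))).trans
    (Multiset.map_id M)

include ha hab hbm hk in
lemma Phi_pos (lam mu : Multiset ℕ) (hl : ∀ p ∈ lam, 0 < p) (hm : ∀ p ∈ mu, 0 < p) :
    (∀ p ∈ (Phi a b m k (lam, mu)).1, 0 < p) ∧ (∀ p ∈ (Phi a b m k (lam, mu)).2, 0 < p) := by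
  constructor
  · intro p hp
    simp only [Phi] at hp
    rw [Multiset.mem_map] at hp
    obtain ⟨q, hq, rfl⟩ := hp
    exact sw_pos ha hab hbm (hl q hq)
  · intro p hp
    simp only [Phi] at hp
    rw [Multiset.mem_add, Multiset.mem_add] at hp
    rcases hp with (hp | hp) | hp
    · rw [Multiset.mem_filter, Multiset.mem_map] at hp
      obtain ⟨⟨q, hq, rfl⟩, -⟩ := hp
      exact sw_pos ha hab hbm (hm q hq)
    · rw [Multiset.mem_replicate] at hp
      rw [hp.2]
      exact w_pos hk
    · exact chipMS_pos hk hp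

include ha hab hbm hk hkd hcong in
lemma Phi_bundle (lam mu : Multiset ℕ) (hl : ∀ p ∈ lam, 0 < p) (hm : ∀ p ∈ mu, 0 < p)
    (hnd : mu.Nodup)
    (hlt : countRes m a lam + countRes m a mu < countRes m b lam + countRes m b mu) :
    (Phi a b m k (lam, mu)).2.Nodup ∧
    ((Phi a b m k (lam, mu)).1.sum + (Phi a b m k (lam, mu)).2.sum = lam.sum + mu.sum) ∧
    (countRes m b (Phi a b m k (lam, mu)).1 + countRes m b (Phi a b m k (lam, mu)).2 <
      countRes m a (Phi a b m k (lam, mu)).1 + countRes m a (Phi a b m k (lam, mu)).2) ∧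
    Multiset.card (Phi a b m k (lam, mu)).1 = Multiset.card lam ∧
    Theta a b m k (Phi a b m k (lam, mu)) = (lam, mu) := by
  classical
  -- abbreviations
  set W := ww a b m k with hW
  set S₀ := s0 a b k with hS₀
  set U := uu a b m k with hU
  set Λ := lam.map (sw a b m) with hΛ
  set ρ := mu.map (sw a b m) with hρdef
  have hρpos : ∀ p ∈ ρ, 0 < p := by
    intro p hp; rw [hρdef, Multiset.mem_map] at hp
    obtain ⟨q, hq, rfl⟩ := hp; exact sw_pos ha hab hbm (hm q hq)
  have hρnd : ρ.Nodup := sw_nodup ha hab hbm hm hnd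
  set D := (countRes m b lam + countRes m b mu) - (countRes m a lam + countRes m a mu) with hDdef
  have hD : countRes m a lam + countRes m a mu + D = countRes m b lam + countRes m b mu := by omega
  have hD1 : 1 ≤ D := by omega
  set V := ρ.count W with hVdef
  have hV1 : V ≤ 1 := Multiset.nodup_iff_count_le_one.mp hρnd W
  set Rest := ρ.filter (fun p => ¬ Spec a b m k p) with hRest
  set Te := (ρ.filter (IsChip k)).sum / (2 * k) with hTe
  have hCh : ρ.filter (IsChip k) = chipMS k Te := by
    rw [hTe]
    exact chip_unique hk _ (hρnd.filter _) (fun p hp => (Multiset.mem_filter.1 hp).2)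
  set V' := (V + S₀ * D) % 2 with hV'def
  have hV'1 : V' ≤ 1 := by omega
  set T' := (2 * Te + S₀ * D + U * V - U * V') / 2 with hT'def
  have hXfact : S₀ ≤ S₀ * D := Nat.le_mul_of_pos_right _ (by omega)
  have hU1 : U ≤ S₀ := u_le_s0 ha hab hbm hk hkd
  have hUodd : U % 2 = 1 := u_odd hk
  have hE5 : 2 * T' + U * V' = 2 * Te + S₀ * D + U * V := by
    rcases Nat.le_one_iff_eq_zero_or_eq_one.1 hV1 with h0 | h0 <;>
      rcases Nat.le_one_iff_eq_zero_or_eq_one.1 hV'1 with h1 | h1 <;>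
      rw [hT'def, h0, h1] <;>
      [skip; skip; skip; skip] <;>
      (try rw [h0] at hV'def) <;> omega
  have hPhi : Phi a b m k (lam, mu)
      = (Λ, Rest + Multiset.replicate V' W + chipMS k T') := rfl
  -- counts of chip parts vanish
  have hChCa : countRes m a (chipMS k Te) = 0 :=
    countRes_chipMS ha hab hbm hk hkd hcong a (Or.inl rfl) Te
  have hChCb : countRes m b (chipMS k Te) = 0 :=
    countRes_chipMS ha hab hbm hk hkd hcong b (Or.inr rfl) Te
  have hChCa' : countRes m a (chipMS k T') = 0 :=
    countRes_chipMS ha hab hbm hk hkd hcong a (Or.inl rfl) T'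
  have hChCb' : countRes m b (chipMS k T') = 0 :=
    countRes_chipMS ha hab hbm hk hkd hcong b (Or.inr rfl) T'
  -- replicate counts agree
  have hrepl : ∀ c : ℕ, c = a ∨ c = b →
      countRes m c (Multiset.replicate V' W) = countRes m c (Multiset.replicate V W) := by
    intro c hc
    by_cases hVV : V' = V
    · rw [hVV]
    · have hXodd : (S₀ * D) % 2 = 1 := by omega
      have hsodd : S₀ % 2 = 1 := by
        rcases Nat.even_or_odd S₀ with he | he
        · exfalso
          have : Even (S₀ * D) := he.mul_right D
          rcases this with ⟨t, ht⟩
          omega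
        · rcases he with ⟨t, ht⟩; omega
      have hwcl := w_class ha hab hbm hk hkd hcong hsodd
      have hz : ∀ n : ℕ, countRes m c (Multiset.replicate n W) = 0 := by
        intro n
        refine countRes_eq_zero (fun p hp => ?_)
        rw [Multiset.eq_of_mem_replicate hp]
        rcases hc with rfl | rfl
        · exact hwcl.1
        · exact hwcl.2
      rw [hz, hz]
  have hdec : ρ = Rest + Multiset.replicate V W + chipMS k Te := by
    rw [hRest, hVdef, ← hCh]
    exact decomp a b m k hk ρ
  -- counts of Mu
  set Mu := Rest + Multiset.replicate V' W + chipMS k T' with hMu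
  have hMuCa : countRes m a Mu = countRes m b mu := by
    have h1 : countRes m a ρ = countRes m b mu := countRes_map_a ha hab hbm mu hm
    rw [hMu, countRes_add, countRes_add, hChCa', hrepl a (Or.inl rfl)]
    rw [hdec, countRes_add, countRes_add, hChCa] at h1
    omega
  have hMuCb : countRes m b Mu = countRes m a mu := by
    have h1 : countRes m b ρ = countRes m a mu := countRes_map_b ha hab hbm mu hm
    rw [hMu, countRes_add, countRes_add, hChCb', hrepl b (Or.inr rfl)]
    rw [hdec, countRes_add, countRes_add, hChCb] at h1
    omega
  have hΛCa : countRes m a Λ = countRes m b lam := countRes_map_a ha hab hbm lam hl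
  have hΛCb : countRes m b Λ = countRes m a lam := countRes_map_b ha hab hbm lam hl
  -- nodup of Mu
  have hwnotchip : ¬ IsChip k W := w_not_chip hk
  have hMund : Mu.Nodup := by
    rw [hMu]
    rw [Multiset.nodup_add]
    refine ⟨?_, chipMS_nodup hk T', ?_⟩
    · rw [Multiset.nodup_add]
      refine ⟨hρnd.filter _, ?_, ?_⟩
      · rcases Nat.le_one_iff_eq_zero_or_eq_one.1 hV'1 with h0 | h0 <;> rw [h0]
        · simp
        · simp
      · rw [Multiset.disjoint_left]
        intro x hx hx2
        rw [Multiset.eq_of_mem_replicate hx2] at hx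
        rw [hRest, Multiset.mem_filter] at hx
        exact hx.2 (Or.inr rfl)
    · rw [Multiset.disjoint_left]
      intro x hx hx2
      have hchip : IsChip k x := chipMS_chip hk hx2
      rw [Multiset.mem_add] at hx
      rcases hx with hx | hx
      · rw [hRest, Multiset.mem_filter] at hx
        exact hx.2 (Or.inl hchip)
      · rw [Multiset.eq_of_mem_replicate hx] at hchip
        exact hwnotchip hchip
  -- sums
  have hks : k * S₀ = b - a := hks0 ha hab hbm hk hkd
  have hkw : k * U = W := rfl
  have hsum1 : Λ.sum + (b - a) * countRes m b lam = lam.sum + (b - a) * countRes m a lam :=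
    sw_sum ha hab hbm lam hl
  have hsum2 : ρ.sum + (b - a) * countRes m b mu = mu.sum + (b - a) * countRes m a mu :=
    sw_sum ha hab hbm mu hm
  have hsumMu : Mu.sum = Rest.sum + V' * W + 2 * k * T' := by
    rw [hMu, Multiset.sum_add, Multiset.sum_add, Multiset.sum_replicate, chipMS_sum,
      smul_eq_mul]
  have hsumρ : ρ.sum = Rest.sum + V * W + 2 * k * Te := by
    rw [hdec, Multiset.sum_add, Multiset.sum_add, Multiset.sum_replicate, chipMS_sum,
      smul_eq_mul]
  have hE5k : 2 * k * T' + V' * W = 2 * k * Te + (b - a) * D + V * W := by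
    have h := congrArg (fun t => k * t) hE5
    simp only [Nat.mul_add] at h
    calc 2 * k * T' + V' * W = k * (2 * T') + k * (U * V') := by rw [← hkw]; ring
    _ = k * (2 * Te) + k * (S₀ * D) + k * (U * V) := by omega
    _ = 2 * k * Te + (b - a) * D + V * W := by rw [← hks, ← hkw]; ring
  have hsumtotal : Λ.sum + Mu.sum = lam.sum + mu.sum := by
    have e1 : (b - a) * (countRes m a lam + countRes m a mu) + (b - a) * D
        = (b - a) * (countRes m b lam + countRes m b mu) := by
      rw [← Nat.mul_add, hD]
    simp only [Nat.mul_add] at e1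
    omega
  -- strict inequality
  have hstrict : countRes m b Λ + countRes m b Mu < countRes m a Λ + countRes m a Mu := by
    rw [hMuCa, hMuCb, hΛCa, hΛCb]; omega
  -- Theta ∘ Phi = id
  have hTheta : Theta a b m k (Λ, Mu) = (lam, mu) := by
    have hcount1 : (countRes m a Λ + countRes m a Mu) - (countRes m b Λ + countRes m b Mu) = D := by
      rw [hMuCa, hMuCb, hΛCa, hΛCb]
    have hcountW : Mu.count W = V' := by
      rw [hMu, Multiset.count_add, Multiset.count_add, Multiset.count_replicate_self]
      have h1 : Rest.count W = 0 := by
        rw [Multiset.count_eq_zero]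
        intro hx
        rw [hRest, Multiset.mem_filter] at hx
        exact hx.2 (Or.inr rfl)
      have h2 : (chipMS k T').count W = 0 := by
        rw [Multiset.count_eq_zero]
        intro hx
        exact hwnotchip (chipMS_chip hk hx)
      omega
    have hfilterchip : Mu.filter (IsChip k) = chipMS k T' := by
      rw [hMu, Multiset.filter_add, Multiset.filter_add]
      have h1 : Rest.filter (IsChip k) = 0 := by
        rw [Multiset.filter_eq_nil]
        intro x hx hchip
        rw [hRest, Multiset.mem_filter] at hx
        exact hx.2 (Or.inl hchip)
      have h2 : (Multiset.replicate V' W).filter (IsChip k) = 0 := by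
        rw [Multiset.filter_eq_nil]
        intro x hx hchip
        rw [Multiset.eq_of_mem_replicate hx] at hchip
        exact hwnotchip hchip
      have h3 : (chipMS k T').filter (IsChip k) = chipMS k T' :=
        Multiset.filter_eq_self.mpr (fun x hx => chipMS_chip hk hx)
      rw [h1, h2, h3, zero_add, zero_add]
    have hfilterspec : Mu.filter (fun p => ¬ Spec a b m k p) = Rest := by
      rw [hMu, Multiset.filter_add, Multiset.filter_add]
      have h1 : Rest.filter (fun p => ¬ Spec a b m k p) = Rest := by
        refine Multiset.filter_eq_self.mpr (fun x hx => ?_)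
        rw [hRest, Multiset.mem_filter] at hx
        exact hx.2
      have h2 : (Multiset.replicate V' W).filter (fun p => ¬ Spec a b m k p) = 0 := by
        rw [Multiset.filter_eq_nil]
        intro x hx hspec
        exact hspec (Or.inr (Multiset.eq_of_mem_replicate hx))
      have h3 : (chipMS k T').filter (fun p => ¬ Spec a b m k p) = 0 := by
        rw [Multiset.filter_eq_nil]
        intro x hx hspec
        exact hspec (Or.inl (chipMS_chip hk hx))
      rw [h1, h2, h3, add_zero, add_zero]
    have hTt : (Mu.filter (IsChip k)).sum / (2 * k) = T' := by
      rw [hfilterchip, chipMS_sum, Nat.mul_div_cancel_left _ (by omega : 0 < 2 * k)]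
    have hV0 : (Mu.count W + S₀ * ((countRes m a Λ + countRes m a Mu)
        - (countRes m b Λ + countRes m b Mu))) % 2 = V := by
      rw [hcountW, hcount1]
      omega
    have hT0 : (2 * ((Mu.filter (IsChip k)).sum / (2 * k)) + U * Mu.count W
        - (U * ((Mu.count W + S₀ * ((countRes m a Λ + countRes m a Mu)
          - (countRes m b Λ + countRes m b Mu))) % 2)
          + S₀ * ((countRes m a Λ + countRes m a Mu)
          - (countRes m b Λ + countRes m b Mu)))) / 2 = Te := by
      rw [hTt, hV0, hcountW, hcount1]
      rcases Nat.le_one_iff_eq_zero_or_eq_one.1 hV1 with h0 | h0 <;>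
        rcases Nat.le_one_iff_eq_zero_or_eq_one.1 hV'1 with h1 | h1 <;>
        rw [h0, h1] at hE5 ⊢ <;> omega
    show (Λ.map (sw a b m), _) = (lam, mu)
    refine Prod.ext ?_ ?_
    · show Λ.map (sw a b m) = lam
      rw [hΛ]; exact map_sw_sw ha hab hbm lam hl
    · show (Mu.filter (fun p => ¬ Spec a b m k p)
          + Multiset.replicate ((Mu.count W + S₀ * ((countRes m a Λ + countRes m a Mu)
            - (countRes m b Λ + countRes m b Mu))) % 2) W
          + chipMS k ((2 * ((Mu.filter (IsChip k)).sum / (2 * k)) + U * Mu.count W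
            - (U * ((Mu.count W + S₀ * ((countRes m a Λ + countRes m a Mu)
              - (countRes m b Λ + countRes m b Mu))) % 2)
              + S₀ * ((countRes m a Λ + countRes m a Mu)
              - (countRes m b Λ + countRes m b Mu)))) / 2)).map (sw a b m) = mu
      rw [hT0, hV0, hfilterspec, ← hdec, hρdef]
      exact map_sw_sw ha hab hbm mu hm
  rw [hPhi]
  exact ⟨hMund, hsumtotal, hstrict, by rw [hΛ]; exact Multiset.card_map _ _, hTheta⟩

lemma sigma_eq (z z' : (kl : ℕ × ℕ) × (kl.1.Partition × kl.2.Partition))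
    (h1 : z.2.1.parts = z'.2.1.parts) (h2 : z.2.2.parts = z'.2.2.parts) : z = z' := by
  obtain ⟨⟨i, j⟩, p, q⟩ := z
  obtain ⟨⟨i', j'⟩, p', q'⟩ := z'
  simp only at h1 h2
  have hi : i = i' := by
    rw [show i = p.parts.sum from p.parts_sum.symm, show i' = p'.parts.sum from p'.parts_sum.symm,
      h1]
  have hj : j = j' := by
    rw [show j = q.parts.sum from q.parts_sum.symm, show j' = q'.parts.sum from q'.parts_sum.symm,
      h2]
  subst hi; subst hj
  have hp : p = p' := Nat.Partition.ext h1
  have hq : q = q' := Nat.Partition.ext h2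
  rw [hp, hq]

end Main

end DWRB

theorem distinct_weighted_residue_bias (a b m k : ℕ) (ha : 1 ≤ a) (hab : a < b)
    (hbm : b ≤ m) (hk : 1 ≤ k) (hkd : k ∣ (b - a))
    (hcong : ∀ h : ℕ, 1 ≤ h → ¬(2 ^ h * k ≡ a [MOD m]) ∧ ¬(2 ^ h * k ≡ b [MOD m]))
    (x : ℝ) (hx : 0 ≤ x) (n : ℕ) :
    pw b a m x 1 n ≤ pw a b m x 1 n := by
  classical
  have key := DWRB.Phi_bundle (a := a) (b := b) (m := m) (k := k) ha hab hbm hk hkd hcong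
  have keypos := DWRB.Phi_pos (a := a) (b := b) (m := m) (k := k) ha hab hbm hk
  unfold pw
  rw [Finset.sum_sigma', Finset.sum_sigma']
  set Sgt := ((Finset.HasAntidiagonal.antidiagonal n).sigma fun kl =>
    (Finset.univ : Finset (kl.1.Partition × kl.2.Partition)).filter
      (fun p => p.2.parts.Nodup ∧
        countRes m b p.1.parts + countRes m b p.2.parts <
          countRes m a p.1.parts + countRes m a p.2.parts)) with hSgt
  set Slt := ((Finset.HasAntidiagonal.antidiagonal n).sigma fun kl =>
    (Finset.univ : Finset (kl.1.Partition × kl.2.Partition)).filter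
      (fun p => p.2.parts.Nodup ∧
        countRes m a p.1.parts + countRes m a p.2.parts <
          countRes m b p.1.parts + countRes m b p.2.parts)) with hSlt
  set F : ((kl : ℕ × ℕ) × (kl.1.Partition × kl.2.Partition)) →
      ((kl : ℕ × ℕ) × (kl.1.Partition × kl.2.Partition)) := fun z =>
    ⟨((DWRB.Phi a b m k (z.2.1.parts, z.2.2.parts)).1.sum,
      (DWRB.Phi a b m k (z.2.1.parts, z.2.2.parts)).2.sum),
      (⟨(DWRB.Phi a b m k (z.2.1.parts, z.2.2.parts)).1,
        fun {i} hi => (keypos z.2.1.parts z.2.2.parts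
          (fun p hp => z.2.1.parts_pos hp) (fun p hp => z.2.2.parts_pos hp)).1 i hi, rfl⟩,
       ⟨(DWRB.Phi a b m k (z.2.1.parts, z.2.2.parts)).2,
        fun {i} hi => (keypos z.2.1.parts z.2.2.parts
          (fun p hp => z.2.1.parts_pos hp) (fun p hp => z.2.2.parts_pos hp)).2 i hi, rfl⟩)⟩ with hF
  have hbundle : ∀ z ∈ Slt,
      (DWRB.Phi a b m k (z.2.1.parts, z.2.2.parts)).2.Nodup ∧
      ((DWRB.Phi a b m k (z.2.1.parts, z.2.2.parts)).1.sum +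
        (DWRB.Phi a b m k (z.2.1.parts, z.2.2.parts)).2.sum = z.2.1.parts.sum + z.2.2.parts.sum) ∧
      (countRes m b (DWRB.Phi a b m k (z.2.1.parts, z.2.2.parts)).1 +
        countRes m b (DWRB.Phi a b m k (z.2.1.parts, z.2.2.parts)).2 <
        countRes m a (DWRB.Phi a b m k (z.2.1.parts, z.2.2.parts)).1 +
        countRes m a (DWRB.Phi a b m k (z.2.1.parts, z.2.2.parts)).2) ∧
      Multiset.card (DWRB.Phi a b m k (z.2.1.parts, z.2.2.parts)).1 = Multiset.card z.2.1.parts ∧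
      DWRB.Theta a b m k (DWRB.Phi a b m k (z.2.1.parts, z.2.2.parts)) =
        (z.2.1.parts, z.2.2.parts) := by
    intro z hz
    rw [hSlt, Finset.mem_sigma, Finset.mem_filter] at hz
    exact key z.2.1.parts z.2.2.parts (fun p hp => z.2.1.parts_pos hp)
      (fun p hp => z.2.2.parts_pos hp) hz.2.2.1 hz.2.2.2
  have hmem : ∀ z ∈ Slt, F z ∈ Sgt := by
    intro z hz
    obtain ⟨hnd, hsum, hlt2, hcard, hth⟩ := hbundle z hz
    rw [hSlt, Finset.mem_sigma] at hz
    rw [hSgt, Finset.mem_sigma, Finset.mem_filter]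
    refine ⟨?_, Finset.mem_univ _, hnd, hlt2⟩
    rw [Finset.HasAntidiagonal.mem_antidiagonal]
    show (DWRB.Phi a b m k (z.2.1.parts, z.2.2.parts)).1.sum +
      (DWRB.Phi a b m k (z.2.1.parts, z.2.2.parts)).2.sum = n
    rw [hsum, z.2.1.parts_sum, z.2.2.parts_sum]
    exact Finset.HasAntidiagonal.mem_antidiagonal.mp hz.1
  have hinj : ∀ z ∈ Slt, ∀ z' ∈ Slt, F z = F z' → z = z' := by
    intro z hz z' hz' h
    have hpp : DWRB.Phi a b m k (z.2.1.parts, z.2.2.parts)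
        = DWRB.Phi a b m k (z'.2.1.parts, z'.2.2.parts) := by
      have h1 := congrArg (fun t => t.2.1.parts) h
      have h2 := congrArg (fun t => t.2.2.parts) h
      exact Prod.ext h1 h2
    have hth := (hbundle z hz).2.2.2.2
    have hth' := (hbundle z' hz').2.2.2.2
    rw [hpp, hth'] at hth
    exact DWRB.sigma_eq z z' (congrArg Prod.fst hth).symm (congrArg Prod.snd hth).symm
  have hweight : ∀ z ∈ Slt,
      x ^ Multiset.card (F z).2.1.parts * (1:ℝ) ^ Multiset.card (F z).2.2.parts
        = x ^ Multiset.card z.2.1.parts * (1:ℝ) ^ Multiset.card z.2.2.parts := by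
    intro z hz
    have hcard := (hbundle z hz).2.2.2.1
    simp only [hF, one_pow]
    rw [hcard]
  calc (∑ z ∈ Slt, x ^ Multiset.card z.2.1.parts * (1:ℝ) ^ Multiset.card z.2.2.parts)
      = ∑ z ∈ Slt, x ^ Multiset.card (F z).2.1.parts * (1:ℝ) ^ Multiset.card (F z).2.2.parts :=
        Finset.sum_congr rfl (fun z hz => (hweight z hz).symm)
    _ = ∑ z ∈ Slt.image F, x ^ Multiset.card z.2.1.parts * (1:ℝ) ^ Multiset.card z.2.2.parts :=
        (Finset.sum_image (f := fun z => x ^ Multiset.card z.2.1.parts * (1:ℝ) ^ Multiset.card z.2.2.parts) hinj).symm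
    _ ≤ ∑ z ∈ Sgt, x ^ Multiset.card z.2.1.parts * (1:ℝ) ^ Multiset.card z.2.2.parts := by
        refine Finset.sum_le_sum_of_subset_of_nonneg ?_ (fun i _ _ => ?_)
        · intro y hy
          rw [Finset.mem_image] at hy
          obtain ⟨z, hz, rfl⟩ := hy
          exact hmem z hz
        · exact mul_nonneg (pow_nonneg hx _) (by norm_num)
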